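/- Let V be a finite-dimensional real inner product space, let Λ̂ ⊆ Λ̃ be subspaces of V, let a(·,·) be a symmetric bilinear form on V that is positive definite on Λ̃ (i.e., a(λ,λ) > 0 for all nonzero λ ∈ Λ̃), and let E : V → V be a linear map with E(Λ̃) ⊆ Λ̂ and E(u) = u for all u ∈ Λ̂. Let ω ≥ 0 be a constant such that a(E·λ, E·λ) ≤ ω·a(λ,λ) for all λ ∈ Λ̃. Define Ŝ : Λ̂ → Λ̂ by requiring ⟨Ŝ·u, v⟩ = a(u,v) for all u, v ∈ Λ̂, and define M : Λ̂ → Λ̂ by M·r = E·η, where η ∈ Λ̃ is the unique element with a(η, ζ) = ⟨r, E·ζ⟩ for all ζ ∈ Λ̃. Then every eigenvalue μ of the composed operator M∘Ŝ (i.e., every μ ∈ ℝ for which there exists nonzero u ∈ Λ̂ with M(Ŝ·u) = μ·u) satisfies 1 ≤ μ ≤ ω; in particular, the condition number of the preconditioned operator M∘Ŝ, the ratio of its largest to smallest eigenvalue, is at most ω. -/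

import Mathlib

open Matrix

/-- Abstract condition number bound for the BDDC preconditioner: every
eigenvalue `μ` of the preconditioned operator `M ∘ Ŝ` satisfies `1 ≤ μ ≤ ω`. -/
theorem bddc_eigenvalue_bound
    {V : Type*} [NormedAddCommGroup V] [InnerProductSpace ℝ V] [FiniteDimensional ℝ V]
    (Λhat Λtil : Submodule ℝ V) (hsub : Λhat ≤ Λtil)
    (a : V →ₗ[ℝ] V →ₗ[ℝ] ℝ)
    (hsym : ∀ u v : V, a u v = a v u)
    (hpos : ∀ l ∈ Λtil, l ≠ 0 → 0 < a l l)
    (E : V →ₗ[ℝ] V)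
    (hEmap : ∀ u ∈ Λtil, E u ∈ Λhat)
    (hEid : ∀ u ∈ Λhat, E u = u)
    (ω : ℝ) (hω : 0 ≤ ω)
    (hbound : ∀ l ∈ Λtil, a (E l) (E l) ≤ ω * a l l)
    (Shat : Λhat →ₗ[ℝ] Λhat)
    (hShat : ∀ u v : Λhat, (inner ℝ ((Shat u : V)) ((v : V)) : ℝ) = a (u : V) (v : V))
    (M : Λhat →ₗ[ℝ] Λhat)
    (hM : ∀ r : Λhat, ∃ η : V,
      (η ∈ Λtil ∧ ∀ ζ ∈ Λtil, a η ζ = (inner ℝ ((r : V)) (E ζ) : ℝ)) ∧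
      ((M r : V) = E η) ∧
      (∀ η' : V, (η' ∈ Λtil ∧ ∀ ζ ∈ Λtil, a η' ζ = (inner ℝ ((r : V)) (E ζ) : ℝ)) →
        η' = η)) :
    ∀ (μ : ℝ) (u : Λhat), u ≠ 0 → M (Shat u) = μ • u → 1 ≤ μ ∧ μ ≤ ω := by
  intro μ u hu hMu
  obtain ⟨η, ⟨hηmem, hηeq⟩, hMr, -⟩ := hM (Shat u)
  have huV : (u : V) ∈ Λtil := hsub u.2
  have huV0 : (u : V) ≠ 0 := fun h => hu (by exact_mod_cast h)
  have hc : 0 < a (u : V) (u : V) := hpos _ huV huV0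
  have hEη : E η = μ • (u : V) := by
    rw [← hMr, hMu]; simp
  have hau : a η (u : V) = a (u : V) (u : V) := by
    rw [hηeq (u : V) huV, hEid (u : V) u.2, hShat u u]
  have haη : a η η = μ * a (u : V) (u : V) := by
    rw [hηeq η hηmem, hEη, real_inner_smul_right, hShat u u]
  have hdiffmem : η - (u : V) ∈ Λtil := Submodule.sub_mem _ hηmem huV
  have hdiff : 0 ≤ a (η - (u : V)) (η - (u : V)) := by
    rcases eq_or_ne (η - (u : V)) 0 with h | h
    · simp [h]
    · exact le_of_lt (hpos _ hdiffmem h)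
  have hexp : a (η - (u : V)) (η - (u : V))
      = a η η - 2 * a η (u : V) + a (u : V) (u : V) := by
    have := hsym (u : V) η
    simp [map_sub, LinearMap.sub_apply]
    linarith
  have h1 : 1 ≤ μ := by nlinarith [hdiff, hexp, hau, haη, hc]
  have hb := hbound η hηmem
  have hEE : a (E η) (E η) = μ * μ * a (u : V) (u : V) := by
    rw [hEη]; simp [_root_.map_smul]; ring
  refine ⟨h1, ?_⟩
  nlinarith [hb, hEE, haη, hc, h1]
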